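/- (Esakia's Lemma for syntactically closed formulae) Let φ(q₁,…,qₙ, p, i₁,…,i_m) be a syntactically closed ML⁺-formula, positive in p. Let (W, R, 𝕎) be a descriptive frame, Q₁,…,Qₙ ∈ 𝕎, x₁,…,x_m ∈ W, and {C_i : i ∈ I} a downwards directed family of closed sets. Then φ(Q₁,…,Qₙ, ⋂_{i∈I} C_i, {x₁},…,{x_m}) = ⋂_{i∈I} φ(Q₁,…,Qₙ, C_i, {x₁},…,{x_m}), where φ is read as a set operator. -/

import Mathlib

/-- The diamond set operator: `◇A = {w : ∃v, R w v ∧ v ∈ A}`. -/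
def diaOp {W : Type} (R : W → W → Prop) (A : Set W) : Set W := {w | ∃ v, R w v ∧ v ∈ A}

/-- The box set operator: `□A = {w : ∀v, R w v → v ∈ A}`. -/
def boxOp {W : Type} (R : W → W → Prop) (A : Set W) : Set W := {w | ∀ v, R w v → v ∈ A}

/-- The inverse diamond set operator: `◇⁻¹A = {w : ∃v ∈ A, R v w} = R(A)`. -/
def idiaOp {W : Type} (R : W → W → Prop) (A : Set W) : Set W := {w | ∃ v, R v w ∧ v ∈ A}

/-- The inverse box set operator: `□⁻¹A = {w : ∀v, R v w → v ∈ A}`. -/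
def iboxOp {W : Type} (R : W → W → Prop) (A : Set W) : Set W := {w | ∀ v, R v w → v ∈ A}
/-- A general frame: a Kripke frame together with a Boolean algebra of
admissible subsets closed under the diamond operator. -/
structure GenFrame (W : Type) where
  R : W → W → Prop
  adm : Set (Set W)
  univ_mem : Set.univ ∈ adm
  compl_mem : ∀ X ∈ adm, Xᶜ ∈ adm
  inter_mem : ∀ X ∈ adm, ∀ Y ∈ adm, X ∩ Y ∈ adm
  dia_mem : ∀ X ∈ adm, diaOp R X ∈ adm

/-- The topology generated by the admissible sets as a base of clopen sets. -/
def GenFrame.top {W : Type} (F : GenFrame W) : TopologicalSpace W :=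
  TopologicalSpace.generateFrom F.adm

/-- Differentiated: distinct points are separated by admissible sets. -/
def GenFrame.differentiated {W : Type} (F : GenFrame W) : Prop :=
  ∀ x y : W, x ≠ y → ∃ X ∈ F.adm, x ∈ X ∧ y ∉ X

/-- Tight: `R x y` iff `x ∈ ◇Y` for every admissible `Y` containing `y`. -/
def GenFrame.tight {W : Type} (F : GenFrame W) : Prop :=
  ∀ x y : W, F.R x y ↔ ∀ Y ∈ F.adm, y ∈ Y → x ∈ diaOp F.R Y

/-- Compact: every family of admissible sets with the finite intersection
property has nonempty intersection. -/
def GenFrame.cpt {W : Type} (F : GenFrame W) : Prop :=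
  ∀ C : Set (Set W), C ⊆ F.adm →
    (∀ D : Set (Set W), D ⊆ C → D.Finite → (⋂₀ D).Nonempty) →
    (⋂₀ C).Nonempty

/-- A descriptive frame is a differentiated, tight and compact general frame. -/
def GenFrame.descriptive {W : Type} (F : GenFrame W) : Prop :=
  F.differentiated ∧ F.tight ∧ F.cpt
/-- Formulas of the extended modal language ML⁺, with nominals and the
inverse modalities `◇⁻¹` (`idia`) and `□⁻¹` (`ibox`). -/
inductive MFp : Type where
  | bot
  | top
  | var (p : Nat)
  | nom (k : Nat)
  | neg (φ : MFp)
  | or (φ ψ : MFp)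
  | and (φ ψ : MFp)
  | dia (φ : MFp)
  | box (φ : MFp)
  | idia (φ : MFp)
  | ibox (φ : MFp)

def MFp.imp (φ ψ : MFp) : MFp := MFp.or (MFp.neg φ) ψ

/-- Satisfaction for ML⁺: `V` interprets propositional variables,
`g` assigns a world (i.e. a singleton) to each nominal. -/
def satp {W : Type} (R : W → W → Prop) (V : Nat → Set W) (g : Nat → W) : MFp → W → Prop
  | .bot, _ => False
  | .top, _ => True
  | .var p, w => w ∈ V p
  | .nom k, w => w = g k
  | .neg φ, w => ¬ satp R V g φ w
  | .or φ ψ, w => satp R V g φ w ∨ satp R V g ψ w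
  | .and φ ψ, w => satp R V g φ w ∧ satp R V g ψ w
  | .dia φ, w => ∃ v, R w v ∧ satp R V g φ v
  | .box φ, w => ∀ v, R w v → satp R V g φ v
  | .idia φ, w => ∃ v, R v w ∧ satp R V g φ v
  | .ibox φ, w => ∀ v, R v w → satp R V g φ v
mutual
/-- Syntactically closed: all occurrences of nominals and `◇⁻¹` are positive,
and all occurrences of `□⁻¹` are negative. -/
def synClosed : MFp → Prop
  | .bot => True
  | .top => True
  | .var _ => True
  | .nom _ => True
  | .neg φ => synOpen φ
  | .or φ ψ => synClosed φ ∧ synClosed ψ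
  | .and φ ψ => synClosed φ ∧ synClosed ψ
  | .dia φ => synClosed φ
  | .box φ => synClosed φ
  | .idia φ => synClosed φ
  | .ibox _ => False

/-- Syntactically open: all occurrences of nominals and `◇⁻¹` are negative,
and all occurrences of `□⁻¹` are positive. -/
def synOpen : MFp → Prop
  | .bot => True
  | .top => True
  | .var _ => True
  | .nom _ => False
  | .neg φ => synClosed φ
  | .or φ ψ => synOpen φ ∧ synOpen ψ
  | .and φ ψ => synOpen φ ∧ synOpen ψ
  | .dia φ => synOpen φ
  | .box φ => synOpen φ
  | .idia _ => False
  | .ibox φ => synOpen φ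
end
mutual
/-- All occurrences of the propositional variable `p` are under an even
number of negations. -/
def positiveInP (p : Nat) : MFp → Prop
  | .bot => True
  | .top => True
  | .var _ => True
  | .nom _ => True
  | .neg φ => negativeInP p φ
  | .or φ ψ => positiveInP p φ ∧ positiveInP p ψ
  | .and φ ψ => positiveInP p φ ∧ positiveInP p ψ
  | .dia φ => positiveInP p φ
  | .box φ => positiveInP p φ
  | .idia φ => positiveInP p φ
  | .ibox φ => positiveInP p φ

/-- All occurrences of the propositional variable `p` are under an odd
number of negations. -/
def negativeInP (p : Nat) : MFp → Prop
  | .bot => True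
  | .top => True
  | .var q => q ≠ p
  | .nom _ => True
  | .neg φ => positiveInP p φ
  | .or φ ψ => negativeInP p φ ∧ negativeInP p ψ
  | .and φ ψ => negativeInP p φ ∧ negativeInP p ψ
  | .dia φ => negativeInP p φ
  | .box φ => negativeInP p φ
  | .idia φ => negativeInP p φ
  | .ibox φ => negativeInP p φ
end


/-! ### Auxiliary development -/

namespace EsakiaAux

variable {W : Type}

/-- `A` is open in the admissible-base sense. -/
def opn (F : GenFrame W) (A : Set W) : Prop :=
  ∀ x ∈ A, ∃ X ∈ F.adm, x ∈ X ∧ X ⊆ A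

/-- `A` is closed in the admissible-base sense. -/
def clsd (F : GenFrame W) (A : Set W) : Prop :=
  ∀ x ∉ A, ∃ X ∈ F.adm, x ∈ X ∧ ∀ y ∈ X, y ∉ A

variable {F : GenFrame W}

lemma empty_adm : (∅ : Set W) ∈ F.adm := by
  have := F.compl_mem _ F.univ_mem
  simpa using this

lemma union_adm {X Y : Set W} (hX : X ∈ F.adm) (hY : Y ∈ F.adm) : X ∪ Y ∈ F.adm := by
  have := F.compl_mem _ (F.inter_mem _ (F.compl_mem _ hX) _ (F.compl_mem _ hY))
  simpa [Set.compl_inter] using this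

lemma sUnion_adm {S : Set (Set W)} (hfin : S.Finite) (hS : ∀ X ∈ S, X ∈ F.adm) :
    ⋃₀ S ∈ F.adm := by
  revert hS
  refine Set.Finite.induction_on _ hfin ?_ ?_
  · intro _
    rw [Set.sUnion_empty]
    exact empty_adm
  · intro a s _ _ ih hS
    rw [Set.sUnion_insert]
    exact union_adm (hS a (Set.mem_insert _ _)) (ih fun X hX => hS X (Set.mem_insert_of_mem _ hX))

lemma adm_opn {X : Set W} (hX : X ∈ F.adm) : opn F X :=
  fun x hx => ⟨X, hX, hx, subset_rfl⟩

lemma adm_clsd {X : Set W} (hX : X ∈ F.adm) : clsd F X :=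
  fun x hx => ⟨Xᶜ, F.compl_mem _ hX, hx, fun _ hy => hy⟩

lemma opn_compl {A : Set W} (h : clsd F A) : opn F Aᶜ := by
  intro x hx
  obtain ⟨X, hX, hxX, hXA⟩ := h x hx
  exact ⟨X, hX, hxX, fun y hy => hXA y hy⟩

lemma clsd_compl {A : Set W} (h : opn F A) : clsd F Aᶜ := by
  intro x hx
  obtain ⟨X, hX, hxX, hXA⟩ := h x (by simpa using hx)
  exact ⟨X, hX, hxX, fun y hy hyc => hyc (hXA hy)⟩

lemma opn_union {A B : Set W} (hA : opn F A) (hB : opn F B) : opn F (A ∪ B) := by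
  intro x hx
  rcases hx with hx | hx
  · obtain ⟨X, hX, h1, h2⟩ := hA x hx
    exact ⟨X, hX, h1, h2.trans Set.subset_union_left⟩
  · obtain ⟨X, hX, h1, h2⟩ := hB x hx
    exact ⟨X, hX, h1, h2.trans Set.subset_union_right⟩

lemma opn_inter {A B : Set W} (hA : opn F A) (hB : opn F B) : opn F (A ∩ B) := by
  rintro x ⟨hxA, hxB⟩
  obtain ⟨X, hX, h1, h2⟩ := hA x hxA
  obtain ⟨Y, hY, h3, h4⟩ := hB x hxB
  exact ⟨X ∩ Y, F.inter_mem _ hX _ hY, ⟨h1, h3⟩,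
    fun y hy => ⟨h2 hy.1, h4 hy.2⟩⟩

lemma clsd_union {A B : Set W} (hA : clsd F A) (hB : clsd F B) : clsd F (A ∪ B) := by
  intro x hx
  obtain ⟨X, hX, h1, h2⟩ := hA x (fun h => hx (Or.inl h))
  obtain ⟨Y, hY, h3, h4⟩ := hB x (fun h => hx (Or.inr h))
  exact ⟨X ∩ Y, F.inter_mem _ hX _ hY, ⟨h1, h3⟩,
    fun y hy hmem => hmem.elim (h2 y hy.1) (h4 y hy.2)⟩

lemma clsd_inter {A B : Set W} (hA : clsd F A) (hB : clsd F B) : clsd F (A ∩ B) := by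
  intro x hx
  by_cases hxA : x ∈ A
  · obtain ⟨X, hX, h1, h2⟩ := hB x (fun h => hx ⟨hxA, h⟩)
    exact ⟨X, hX, h1, fun y hy hmem => h2 y hy hmem.2⟩
  · obtain ⟨X, hX, h1, h2⟩ := hA x hxA
    exact ⟨X, hX, h1, fun y hy hmem => h2 y hy hmem.1⟩

lemma singleton_clsd (hdiff : F.differentiated) (a : W) : clsd F {a} := by
  intro x hx
  obtain ⟨X, hX, hxX, haX⟩ := hdiff x a hx
  exact ⟨X, hX, hxX, fun y hyX hya => haX (by rwa [Set.mem_singleton_iff.1 hya] at hyX)⟩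

/-- A point lying in every admissible superset of a closed set lies in the set. -/
lemma mem_of_clsd {A : Set W} (hA : clsd F A) {x : W}
    (hx : ∀ X ∈ F.adm, A ⊆ X → x ∈ X) : x ∈ A := by
  by_contra hxA
  obtain ⟨X, hX, hxX, hXA⟩ := hA x hxA
  have : A ⊆ Xᶜ := fun y hy hyX => hXA y hyX hy
  exact hx Xᶜ (F.compl_mem _ hX) this hxX

/-- Directed intersections of closed sets meeting a fixed closed set. -/
lemma cpt_directed (hcpt : F.cpt) {I : Type} [Nonempty I]
    (T : Set W) (hT : clsd F T) (S : I → Set W) (hS : ∀ i, clsd F (S i))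
    (hdir : ∀ i j, ∃ k, S k ⊆ S i ∩ S j)
    (hne : ∀ i, (T ∩ S i).Nonempty) :
    (T ∩ ⋂ i, S i).Nonempty := by
  set 𝒞 : Set (Set W) := {X | X ∈ F.adm ∧ (T ⊆ X ∨ ∃ i, S i ⊆ X)} with h𝒞
  have key : ∀ D : Set (Set W), D.Finite → D ⊆ 𝒞 → ∃ k, T ∩ S k ⊆ ⋂₀ D := by
    intro D hfin
    refine Set.Finite.induction_on _ hfin ?_ ?_
    · intro _
      exact ⟨Classical.arbitrary I, by simp⟩
    · intro X D' _ _ ih hsub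
      obtain ⟨k, hk⟩ := ih (fun Y hY => hsub (Set.mem_insert_of_mem _ hY))
      have hX := hsub (Set.mem_insert _ _)
      rcases hX.2 with hTX | ⟨i, hSX⟩
      · refine ⟨k, ?_⟩
        rw [Set.sInter_insert]
        exact fun y hy => ⟨hTX hy.1, hk hy⟩
      · obtain ⟨k', hk'⟩ := hdir i k
        refine ⟨k', ?_⟩
        rw [Set.sInter_insert]
        rintro y ⟨hyT, hyS⟩
        exact ⟨hSX (hk' hyS).1, hk ⟨hyT, (hk' hyS).2⟩⟩
  have hcc : (⋂₀ 𝒞).Nonempty := by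
    refine hcpt 𝒞 (fun X hX => hX.1) (fun D hD hfin => ?_)
    obtain ⟨k, hk⟩ := key D hfin hD
    obtain ⟨y, hy⟩ := hne k
    exact ⟨y, hk hy⟩
  obtain ⟨x, hx⟩ := hcc
  refine ⟨x, ?_, ?_⟩
  · exact mem_of_clsd hT fun X hX hTX => hx X ⟨hX, Or.inl hTX⟩
  · rw [Set.mem_iInter]
    intro i
    exact mem_of_clsd (hS i) fun X hX hSX => hx X ⟨hX, Or.inr ⟨i, hSX⟩⟩

/-- Closed sets are compact w.r.t. admissible covers. -/
lemma cpt_cover (hcpt : F.cpt) {A : Set W} (hA : clsd F A)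
    {𝒴 : Set (Set W)} (h𝒴 : 𝒴 ⊆ F.adm) (hcov : A ⊆ ⋃₀ 𝒴) :
    ∃ 𝒴' ⊆ 𝒴, 𝒴'.Finite ∧ A ⊆ ⋃₀ 𝒴' := by
  by_contra hno
  push_neg at hno
  set 𝒞 : Set (Set W) := {X | X ∈ F.adm ∧ A ⊆ X} ∪ (compl '' 𝒴) with h𝒞
  have h1 : 𝒞 ⊆ F.adm := by
    rintro X (⟨hX, _⟩ | ⟨Y, hY, rfl⟩)
    · exact hX
    · exact F.compl_mem _ (h𝒴 hY)
  have h2 : ∀ D ⊆ 𝒞, D.Finite → (⋂₀ D).Nonempty := by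
    intro D hD hfin
    set 𝒴' : Set (Set W) := {Y | Y ∈ 𝒴 ∧ Yᶜ ∈ D} with h𝒴'
    have hfin' : 𝒴'.Finite := by
      have hsub : 𝒴' ⊆ compl ⁻¹' D := fun Y hY => hY.2
      have hinj : Set.InjOn (compl : Set W → Set W) (compl ⁻¹' D) :=
        fun a _ b _ h => compl_injective h
      exact (hfin.preimage hinj).subset hsub
    have hns := hno 𝒴' (fun Y hY => hY.1) hfin'
    rw [Set.not_subset] at hns
    obtain ⟨x, hxA, hx𝒴'⟩ := hns
    refine ⟨x, fun X hX => ?_⟩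
    rcases hD hX with ⟨_, hAX⟩ | ⟨Y, hY, rfl⟩
    · exact hAX hxA
    · intro hxY
      exact hx𝒴' ⟨Y, ⟨hY, hX⟩, hxY⟩
  obtain ⟨x, hx⟩ := hcpt 𝒞 h1 h2
  have hxA : x ∈ A := mem_of_clsd hA fun X hX hAX => hx X (Or.inl ⟨hX, hAX⟩)
  obtain ⟨Y, hY, hxY⟩ := hcov hxA
  exact hx Yᶜ (Or.inr ⟨Y, hY, rfl⟩) hxY

lemma Rfwd_clsd (htight : F.tight) (x : W) : clsd F {v | F.R x v} := by
  intro y hy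
  have hnR : ¬ F.R x y := hy
  rw [htight x y] at hnR
  push_neg at hnR
  obtain ⟨Y, hY, hyY, hxY⟩ := hnR
  exact ⟨Y, hY, hyY, fun z hzY hrz => hxY ⟨z, hrz, hzY⟩⟩

lemma Rbwd_clsd (htight : F.tight) (x : W) : clsd F {v | F.R v x} := by
  intro y hy
  have hnR : ¬ F.R y x := hy
  rw [htight y x] at hnR
  push_neg at hnR
  obtain ⟨Y, hY, hxY, hyY⟩ := hnR
  refine ⟨(diaOp F.R Y)ᶜ, F.compl_mem _ (F.dia_mem _ hY), hyY, ?_⟩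
  intro z hz hrz
  exact hz (((htight z x).1 hrz) Y hY hxY)

lemma dia_opn {A : Set W} (hA : opn F A) : opn F (diaOp F.R A) := by
  rintro x ⟨v, hrv, hvA⟩
  obtain ⟨Y, hY, hvY, hYA⟩ := hA v hvA
  exact ⟨diaOp F.R Y, F.dia_mem _ hY, ⟨v, hrv, hvY⟩,
    fun w hw => by obtain ⟨u, hru, huY⟩ := hw; exact ⟨u, hru, hYA huY⟩⟩

lemma dia_clsd (htight : F.tight) (hcpt : F.cpt) {A : Set W} (hA : clsd F A) :
    clsd F (diaOp F.R A) := by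
  intro x hx
  have hcov : A ⊆ ⋃₀ {Y | Y ∈ F.adm ∧ x ∉ diaOp F.R Y} := by
    intro v hv
    have hnR : ¬ F.R x v := fun h => hx ⟨v, h, hv⟩
    rw [htight x v] at hnR
    push_neg at hnR
    obtain ⟨Y, hY, hvY, hxY⟩ := hnR
    exact ⟨Y, ⟨hY, hxY⟩, hvY⟩
  obtain ⟨𝒴', hsub, hfin, hcov'⟩ := cpt_cover hcpt hA (fun Y hY => hY.1) hcov
  have hU : ⋃₀ 𝒴' ∈ F.adm := sUnion_adm hfin fun Y hY => (hsub hY).1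
  refine ⟨(diaOp F.R (⋃₀ 𝒴'))ᶜ, F.compl_mem _ (F.dia_mem _ hU), ?_, ?_⟩
  · rintro ⟨v, hrv, Y, hY, hvY⟩
    exact (hsub hY).2 ⟨v, hrv, hvY⟩
  · rintro y hy ⟨v, hrv, hvA⟩
    exact hy ⟨v, hrv, hcov' hvA⟩

lemma idia_clsd (htight : F.tight) (hcpt : F.cpt) {A : Set W} (hA : clsd F A) :
    clsd F (idiaOp F.R A) := by
  intro x hx
  have hcov : A ⊆ ⋃₀ {Z | ∃ Y ∈ F.adm, x ∈ Y ∧ Z = (diaOp F.R Y)ᶜ} := by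
    intro v hv
    have hnR : ¬ F.R v x := fun h => hx ⟨v, h, hv⟩
    rw [htight v x] at hnR
    push_neg at hnR
    obtain ⟨Y, hY, hxY, hvY⟩ := hnR
    exact ⟨(diaOp F.R Y)ᶜ, ⟨Y, hY, hxY, rfl⟩, hvY⟩
  have hsubadm : {Z | ∃ Y ∈ F.adm, x ∈ Y ∧ Z = (diaOp F.R Y)ᶜ} ⊆ F.adm := by
    rintro Z ⟨Y, hY, _, rfl⟩
    exact F.compl_mem _ (F.dia_mem _ hY)
  obtain ⟨𝒵, hsub, hfin, hcov'⟩ := cpt_cover hcpt hA hsubadm hcov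
  have key : ∀ 𝒵' : Set (Set W), 𝒵'.Finite →
      𝒵' ⊆ {Z | ∃ Y ∈ F.adm, x ∈ Y ∧ Z = (diaOp F.R Y)ᶜ} →
      ∃ X ∈ F.adm, x ∈ X ∧ ∀ w ∈ X, ∀ v, F.R v w → v ∉ ⋃₀ 𝒵' := by
    intro 𝒵' hfin'
    refine Set.Finite.induction_on _ hfin' ?_ ?_
    · intro _
      exact ⟨Set.univ, F.univ_mem, trivial, by simp⟩
    · intro Z S _ _ ih hsub'
      obtain ⟨X', hX', hxX', hprop⟩ := ih fun Y hY => hsub' (Set.mem_insert_of_mem _ hY)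
      obtain ⟨Y, hY, hxY, rfl⟩ := hsub' (Set.mem_insert _ _)
      refine ⟨X' ∩ Y, F.inter_mem _ hX' _ hY, ⟨hxX', hxY⟩, ?_⟩
      rintro w ⟨hwX', hwY⟩ v hrv hvmem
      rw [Set.sUnion_insert] at hvmem
      rcases hvmem with hvZ | hvS
      · exact hvZ ⟨w, hrv, hwY⟩
      · exact hprop w hwX' v hrv hvS
  obtain ⟨X, hXadm, hxX, hX⟩ := key 𝒵 hfin hsub
  refine ⟨X, hXadm, hxX, ?_⟩
  rintro y hy ⟨v, hrv, hvA⟩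
  exact hX y hy v hrv (hcov' hvA)

lemma boxOp_eq (R : W → W → Prop) (A : Set W) : boxOp R A = (diaOp R Aᶜ)ᶜ := by
  ext w
  simp [boxOp, diaOp]

lemma iboxOp_eq (R : W → W → Prop) (A : Set W) : iboxOp R A = (idiaOp R Aᶜ)ᶜ := by
  ext w
  simp [iboxOp, idiaOp]

lemma box_clsd {A : Set W} (hA : clsd F A) : clsd F (boxOp F.R A) := by
  rw [boxOp_eq]
  exact clsd_compl (dia_opn (opn_compl hA))

lemma box_opn (htight : F.tight) (hcpt : F.cpt) {A : Set W} (hA : opn F A) :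
    opn F (boxOp F.R A) := by
  rw [boxOp_eq]
  exact opn_compl (dia_clsd htight hcpt (clsd_compl hA))

lemma ibox_opn (htight : F.tight) (hcpt : F.cpt) {A : Set W} (hA : opn F A) :
    opn F (iboxOp F.R A) := by
  rw [iboxOp_eq]
  exact opn_compl (idia_clsd htight hcpt (clsd_compl hA))

/-- Monotonicity in a positive/negative variable. -/
lemma satp_mono {R : W → W → Prop} (g : Nat → W) (p : Nat)
    (V : Nat → Set W) {A B : Set W} (hAB : A ⊆ B) :
    ∀ φ : MFp, ∀ w : W,
      (positiveInP p φ → satp R (Function.update V p A) g φ w →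
        satp R (Function.update V p B) g φ w) ∧
      (negativeInP p φ → satp R (Function.update V p B) g φ w →
        satp R (Function.update V p A) g φ w) := by
  intro φ
  induction φ with
  | bot => exact fun w => ⟨fun _ h => h, fun _ h => h⟩
  | top => exact fun w => ⟨fun _ h => h, fun _ h => h⟩
  | var q =>
    intro w
    by_cases hq : q = p
    · subst hq
      constructor
      · intro _ h
        simp only [satp, Function.update_self] at h ⊢
        exact hAB h
      · intro hneg
        exact absurd rfl hneg
    · constructor
      · intro _ h
        simpa only [satp, Function.update_of_ne hq] using h
      · intro _ h
        simpa only [satp, Function.update_of_ne hq] using h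
  | nom k => exact fun w => ⟨fun _ h => h, fun _ h => h⟩
  | neg φ ih =>
    intro w
    constructor
    · intro hpos h hB
      exact h ((ih w).2 hpos hB)
    · intro hneg h hA
      exact h ((ih w).1 hneg hA)
  | or φ ψ ihφ ihψ =>
    intro w
    constructor
    · rintro hpos (h | h)
      · exact Or.inl ((ihφ w).1 hpos.1 h)
      · exact Or.inr ((ihψ w).1 hpos.2 h)
    · rintro hneg (h | h)
      · exact Or.inl ((ihφ w).2 hneg.1 h)
      · exact Or.inr ((ihψ w).2 hneg.2 h)
  | and φ ψ ihφ ihψ =>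
    intro w
    constructor
    · rintro hpos ⟨h1, h2⟩
      exact ⟨(ihφ w).1 hpos.1 h1, (ihψ w).1 hpos.2 h2⟩
    · rintro hneg ⟨h1, h2⟩
      exact ⟨(ihφ w).2 hneg.1 h1, (ihψ w).2 hneg.2 h2⟩
  | dia φ ih =>
    intro w
    constructor
    · rintro hpos ⟨v, hrv, hv⟩
      exact ⟨v, hrv, (ih v).1 hpos hv⟩
    · rintro hneg ⟨v, hrv, hv⟩
      exact ⟨v, hrv, (ih v).2 hneg hv⟩
  | box φ ih =>
    intro w
    constructor
    · intro hpos h v hrv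
      exact (ih v).1 hpos (h v hrv)
    · intro hneg h v hrv
      exact (ih v).2 hneg (h v hrv)
  | idia φ ih =>
    intro w
    constructor
    · rintro hpos ⟨v, hrv, hv⟩
      exact ⟨v, hrv, (ih v).1 hpos hv⟩
    · rintro hneg ⟨v, hrv, hv⟩
      exact ⟨v, hrv, (ih v).2 hneg hv⟩
  | ibox φ ih =>
    intro w
    constructor
    · intro hpos h v hrv
      exact (ih v).1 hpos (h v hrv)
    · intro hneg h v hrv
      exact (ih v).2 hneg (h v hrv)

/-- Syntactically closed formulas positive in `p` define closed sets; syntactically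
open formulas negative in `p` define open sets (with `V p` closed, other values
admissible, nominals interpreted as points). -/
lemma satp_clopn (F : GenFrame W) (hdiff : F.differentiated) (htight : F.tight)
    (hcpt : F.cpt) (g : Nat → W) (p : Nat) (V : Nat → Set W)
    (hV : ∀ q, q ≠ p → V q ∈ F.adm) (hVp : clsd F (V p)) :
    ∀ φ : MFp,
      (synClosed φ → positiveInP p φ → clsd F {w | satp F.R V g φ w}) ∧
      (synOpen φ → negativeInP p φ → opn F {w | satp F.R V g φ w}) := by
  intro φ
  induction φ with
  | bot =>
    constructor
    · intro _ _ x _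
      exact ⟨Set.univ, F.univ_mem, trivial, fun _ _ h => h⟩
    · intro _ _ x hx
      exact hx.elim
  | top =>
    constructor
    · intro _ _ x hx
      exact (hx trivial).elim
    · intro _ _ x _
      exact ⟨Set.univ, F.univ_mem, trivial, fun _ _ => trivial⟩
  | var q =>
    constructor
    · intro _ _
      by_cases hq : q = p
      · subst hq
        exact hVp
      · exact adm_clsd (hV q hq)
    · intro _ hneg
      exact adm_opn (hV q hneg)
  | nom k =>
    constructor
    · intro _ _
      exact singleton_clsd hdiff (g k)
    · intro ho
      exact ho.elim
  | neg φ ih =>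
    constructor
    · intro hc hpos
      exact clsd_compl (ih.2 hc hpos)
    · intro ho hneg
      exact opn_compl (ih.1 ho hneg)
  | or φ ψ ihφ ihψ =>
    constructor
    · intro hc hpos
      exact clsd_union (ihφ.1 hc.1 hpos.1) (ihψ.1 hc.2 hpos.2)
    · intro ho hneg
      exact opn_union (ihφ.2 ho.1 hneg.1) (ihψ.2 ho.2 hneg.2)
  | and φ ψ ihφ ihψ =>
    constructor
    · intro hc hpos
      exact clsd_inter (ihφ.1 hc.1 hpos.1) (ihψ.1 hc.2 hpos.2)
    · intro ho hneg
      exact opn_inter (ihφ.2 ho.1 hneg.1) (ihψ.2 ho.2 hneg.2)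
  | dia φ ih =>
    constructor
    · intro hc hpos
      exact dia_clsd htight hcpt (ih.1 hc hpos)
    · intro ho hneg
      exact dia_opn (ih.2 ho hneg)
  | box φ ih =>
    constructor
    · intro hc hpos
      exact box_clsd (ih.1 hc hpos)
    · intro ho hneg
      exact box_opn htight hcpt (ih.2 ho hneg)
  | idia φ ih =>
    constructor
    · intro hc hpos
      exact idia_clsd htight hcpt (ih.1 hc hpos)
    · intro ho
      exact ho.elim
  | ibox φ ih =>
    constructor
    · intro hc
      exact hc.elim
    · intro ho hneg
      exact ibox_opn htight hcpt (ih.2 ho hneg)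

lemma sUnion_bound {I : Type} [Nonempty I] (U : I → Set W)
    (hdirU : ∀ i j, ∃ k, U i ⊆ U k ∧ U j ⊆ U k) :
    ∀ 𝒴 : Set (Set W), 𝒴.Finite → (∀ Y ∈ 𝒴, ∃ i, Y ⊆ U i) → ∃ k, ⋃₀ 𝒴 ⊆ U k := by
  intro 𝒴 hfin
  refine Set.Finite.induction_on _ hfin ?_ ?_
  · intro _
    exact ⟨Classical.arbitrary I, by simp⟩
  · intro Y S _ _ ih hsub
    obtain ⟨k, hk⟩ := ih fun Z hZ => hsub Z (Set.mem_insert_of_mem _ hZ)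
    obtain ⟨i, hi⟩ := hsub Y (Set.mem_insert _ _)
    obtain ⟨k', h1, h2⟩ := hdirU i k
    refine ⟨k', ?_⟩
    rw [Set.sUnion_insert]
    exact Set.union_subset (hi.trans h1) (hk.trans h2)

/-- The hard directions of Esakia's lemma, by simultaneous induction. -/
lemma main (F : GenFrame W) (hdiff : F.differentiated) (htight : F.tight)
    (hcpt : F.cpt) (p : Nat) (V : Nat → Set W)
    (hV : ∀ q, q ≠ p → V q ∈ F.adm) (g : Nat → W)
    {I : Type} [Nonempty I] (C : I → Set W)
    (hclosed : ∀ i, clsd F (C i))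
    (hdir : ∀ i j, ∃ k, C k ⊆ C i ∩ C j) :
    ∀ φ : MFp, ∀ w : W,
      (synClosed φ → positiveInP p φ →
        (∀ i, satp F.R (Function.update V p (C i)) g φ w) →
        satp F.R (Function.update V p (⋂ i, C i)) g φ w) ∧
      (synOpen φ → negativeInP p φ →
        satp F.R (Function.update V p (⋂ i, C i)) g φ w →
        ∃ i, satp F.R (Function.update V p (C i)) g φ w) := by
  have hVc : ∀ i q, q ≠ p → Function.update V p (C i) q ∈ F.adm := by
    intro i q hq
    rw [Function.update_of_ne hq]
    exact hV q hq
  have hVcp : ∀ i, clsd F (Function.update V p (C i) p) := by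
    intro i
    rw [Function.update_self]
    exact hclosed i
  intro φ
  induction φ with
  | bot =>
    intro w
    exact ⟨fun _ _ h => h (Classical.arbitrary I), fun _ _ h => h.elim⟩
  | top =>
    intro w
    exact ⟨fun _ _ _ => trivial, fun _ _ _ => ⟨Classical.arbitrary I, trivial⟩⟩
  | var q =>
    intro w
    constructor
    · intro _ _ h
      by_cases hq : q = p
      · subst hq
        simp only [satp, Function.update_self] at h ⊢
        exact Set.mem_iInter.2 h
      · simpa only [satp, Function.update_of_ne hq] using h (Classical.arbitrary I)
    · intro _ hneg h
      refine ⟨Classical.arbitrary I, ?_⟩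
      have hq : q ≠ p := hneg
      simpa only [satp, Function.update_of_ne hq] using h
  | nom k =>
    intro w
    constructor
    · intro _ _ h
      exact h (Classical.arbitrary I)
    · intro ho
      exact ho.elim
  | neg φ ih =>
    intro w
    constructor
    · intro hc hpos h hsat
      obtain ⟨i, hi⟩ := (ih w).2 hc hpos hsat
      exact h i hi
    · intro ho hneg h
      by_contra hcon
      push_neg at hcon
      have hcon' : ∀ i, satp F.R (Function.update V p (C i)) g φ w :=
        fun i => not_not.1 (hcon i)
      exact h ((ih w).1 ho hneg hcon')
  | or φ ψ ihφ ihψ =>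
    intro w
    constructor
    · intro hc hpos h
      by_cases hall : ∀ i, satp F.R (Function.update V p (C i)) g φ w
      · exact Or.inl ((ihφ w).1 hc.1 hpos.1 hall)
      · push_neg at hall
        obtain ⟨i₀, hi₀⟩ := hall
        refine Or.inr ((ihψ w).1 hc.2 hpos.2 ?_)
        intro j
        obtain ⟨k, hk⟩ := hdir i₀ j
        rcases h k with hφ | hψ
        · exact absurd ((satp_mono g p V (fun a ha => (hk ha).1) φ w).1 hpos.1 hφ) hi₀
        · exact (satp_mono g p V (fun a ha => (hk ha).2) ψ w).1 hpos.2 hψ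
    · intro ho hneg h
      rcases h with h | h
      · obtain ⟨i, hi⟩ := (ihφ w).2 ho.1 hneg.1 h
        exact ⟨i, Or.inl hi⟩
      · obtain ⟨i, hi⟩ := (ihψ w).2 ho.2 hneg.2 h
        exact ⟨i, Or.inr hi⟩
  | and φ ψ ihφ ihψ =>
    intro w
    constructor
    · intro hc hpos h
      exact ⟨(ihφ w).1 hc.1 hpos.1 fun i => (h i).1, (ihψ w).1 hc.2 hpos.2 fun i => (h i).2⟩
    · rintro ho hneg ⟨h1, h2⟩
      obtain ⟨i, hi⟩ := (ihφ w).2 ho.1 hneg.1 h1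
      obtain ⟨j, hj⟩ := (ihψ w).2 ho.2 hneg.2 h2
      obtain ⟨k, hk⟩ := hdir i j
      exact ⟨k, (satp_mono g p V (fun a ha => (hk ha).1) φ w).2 hneg.1 hi,
                (satp_mono g p V (fun a ha => (hk ha).2) ψ w).2 hneg.2 hj⟩
  | dia φ ih =>
    intro w
    constructor
    · intro hc hpos h
      set S : I → Set W := fun i => {v | satp F.R (Function.update V p (C i)) g φ v} with hSdef
      have hScl : ∀ i, clsd F (S i) := fun i =>
        (satp_clopn F hdiff htight hcpt g p _ (hVc i) (hVcp i) φ).1 hc hpos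
      have hSdir : ∀ i j, ∃ k, S k ⊆ S i ∩ S j := by
        intro i j
        obtain ⟨k, hk⟩ := hdir i j
        exact ⟨k, fun v hv => ⟨(satp_mono g p V (fun a ha => (hk ha).1) φ v).1 hpos hv,
                               (satp_mono g p V (fun a ha => (hk ha).2) φ v).1 hpos hv⟩⟩
      have hne : ∀ i, ({v | F.R w v} ∩ S i).Nonempty := by
        intro i
        obtain ⟨v, h1, h2⟩ := h i
        exact ⟨v, h1, h2⟩
      obtain ⟨v, hv1, hv2⟩ := cpt_directed hcpt {v | F.R w v} (Rfwd_clsd htight w) S hScl hSdir hne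
      exact ⟨v, hv1, (ih v).1 hc hpos fun i => Set.mem_iInter.1 hv2 i⟩
    · rintro ho hneg ⟨v, hrv, hv⟩
      obtain ⟨i, hi⟩ := (ih v).2 ho hneg hv
      exact ⟨i, v, hrv, hi⟩
  | box φ ih =>
    intro w
    constructor
    · intro hc hpos h v hrv
      exact (ih v).1 hc hpos fun i => h i v hrv
    · intro ho hneg h
      set U : I → Set W := fun i => {v | satp F.R (Function.update V p (C i)) g φ v} with hUdef
      have hUopn : ∀ i, opn F (U i) := fun i =>
        (satp_clopn F hdiff htight hcpt g p _ (hVc i) (hVcp i) φ).2 ho hneg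
      have hcov : {v | F.R w v} ⊆ ⋃₀ {Y | Y ∈ F.adm ∧ ∃ i, Y ⊆ U i} := by
        intro v hrv
        obtain ⟨i, hi⟩ := (ih v).2 ho hneg (h v hrv)
        obtain ⟨Y, hY, hvY, hYU⟩ := hUopn i v hi
        exact ⟨Y, ⟨hY, i, hYU⟩, hvY⟩
      obtain ⟨𝒴', hsub, hfin, hcov'⟩ :=
        cpt_cover hcpt (Rfwd_clsd htight w) (fun Y hY => hY.1) hcov
      have hdirU : ∀ i j, ∃ k, U i ⊆ U k ∧ U j ⊆ U k := by
        intro i j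
        obtain ⟨k, hk⟩ := hdir i j
        exact ⟨k, fun v hv => (satp_mono g p V (fun a ha => (hk ha).1) φ v).2 hneg hv,
                  fun v hv => (satp_mono g p V (fun a ha => (hk ha).2) φ v).2 hneg hv⟩
      obtain ⟨k, hk⟩ := sUnion_bound U hdirU 𝒴' hfin fun Y hY => (hsub hY).2
      exact ⟨k, fun v hrv => hk (hcov' hrv)⟩
  | idia φ ih =>
    intro w
    constructor
    · intro hc hpos h
      set S : I → Set W := fun i => {v | satp F.R (Function.update V p (C i)) g φ v} with hSdef
      have hScl : ∀ i, clsd F (S i) := fun i =>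
        (satp_clopn F hdiff htight hcpt g p _ (hVc i) (hVcp i) φ).1 hc hpos
      have hSdir : ∀ i j, ∃ k, S k ⊆ S i ∩ S j := by
        intro i j
        obtain ⟨k, hk⟩ := hdir i j
        exact ⟨k, fun v hv => ⟨(satp_mono g p V (fun a ha => (hk ha).1) φ v).1 hpos hv,
                               (satp_mono g p V (fun a ha => (hk ha).2) φ v).1 hpos hv⟩⟩
      have hne : ∀ i, ({v | F.R v w} ∩ S i).Nonempty := by
        intro i
        obtain ⟨v, h1, h2⟩ := h i
        exact ⟨v, h1, h2⟩
      obtain ⟨v, hv1, hv2⟩ := cpt_directed hcpt {v | F.R v w} (Rbwd_clsd htight w) S hScl hSdir hne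
      exact ⟨v, hv1, (ih v).1 hc hpos fun i => Set.mem_iInter.1 hv2 i⟩
    · intro ho
      exact ho.elim
  | ibox φ ih =>
    intro w
    constructor
    · intro hc
      exact hc.elim
    · intro ho hneg h
      set U : I → Set W := fun i => {v | satp F.R (Function.update V p (C i)) g φ v} with hUdef
      have hUopn : ∀ i, opn F (U i) := fun i =>
        (satp_clopn F hdiff htight hcpt g p _ (hVc i) (hVcp i) φ).2 ho hneg
      have hcov : {v | F.R v w} ⊆ ⋃₀ {Y | Y ∈ F.adm ∧ ∃ i, Y ⊆ U i} := by
        intro v hrv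
        obtain ⟨i, hi⟩ := (ih v).2 ho hneg (h v hrv)
        obtain ⟨Y, hY, hvY, hYU⟩ := hUopn i v hi
        exact ⟨Y, ⟨hY, i, hYU⟩, hvY⟩
      obtain ⟨𝒴', hsub, hfin, hcov'⟩ :=
        cpt_cover hcpt (Rbwd_clsd htight w) (fun Y hY => hY.1) hcov
      have hdirU : ∀ i j, ∃ k, U i ⊆ U k ∧ U j ⊆ U k := by
        intro i j
        obtain ⟨k, hk⟩ := hdir i j
        exact ⟨k, fun v hv => (satp_mono g p V (fun a ha => (hk ha).1) φ v).2 hneg hv,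
                  fun v hv => (satp_mono g p V (fun a ha => (hk ha).2) φ v).2 hneg hv⟩
      obtain ⟨k, hk⟩ := sUnion_bound U hdirU 𝒴' hfin fun Y hY => (hsub hY).2
      exact ⟨k, fun v hrv => hk (hcov' hrv)⟩

/-- Topologically closed sets are `clsd`. -/
lemma isClosed_clsd (F : GenFrame W) {A : Set W} (h : @IsClosed W F.top A) : clsd F A := by
  have h' : TopologicalSpace.GenerateOpen F.adm Aᶜ := h.isOpen_compl
  have key : ∀ U : Set W, TopologicalSpace.GenerateOpen F.adm U →
      ∀ x ∈ U, ∃ X ∈ F.adm, x ∈ X ∧ X ⊆ U := by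
    intro U hU
    induction hU with
    | basic U hU => exact fun x hx => ⟨U, hU, hx, subset_rfl⟩
    | univ => exact fun x _ => ⟨Set.univ, F.univ_mem, trivial, fun _ _ => trivial⟩
    | inter U V _ _ ihU ihV =>
      rintro x ⟨hxU, hxV⟩
      obtain ⟨X, hX, h1, h2⟩ := ihU x hxU
      obtain ⟨Y, hY, h3, h4⟩ := ihV x hxV
      exact ⟨X ∩ Y, F.inter_mem _ hX _ hY, ⟨h1, h3⟩, fun y hy => ⟨h2 hy.1, h4 hy.2⟩⟩
    | sUnion S _ ih =>
      rintro x ⟨U, hU, hxU⟩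
      obtain ⟨X, hX, h1, h2⟩ := ih U hU x hxU
      exact ⟨X, hX, h1, fun y hy => ⟨U, hU, h2 hy⟩⟩
  intro x hx
  obtain ⟨X, hX, h1, h2⟩ := key Aᶜ h' x hx
  exact ⟨X, hX, h1, fun y hy => h2 hy⟩

end EsakiaAux

/-- Esakia's Lemma for syntactically closed formulae: a syntactically closed
formula positive in `p`, viewed as a set operator in `p` with admissible
parameters and singleton nominals, commutes with intersections of downwards
directed families of nonempty closed sets. -/
theorem esakia_synClosed {W : Type} (F : GenFrame W) (hF : F.descriptive)
    (φ : MFp) (p : Nat) (hc : synClosed φ) (hpos : positiveInP p φ)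
    (V : Nat → Set W) (hV : ∀ q, q ≠ p → V q ∈ F.adm) (g : Nat → W)
    {I : Type} [Nonempty I] (C : I → Set W)
    (hclosed : ∀ i, @IsClosed W F.top (C i))
    (hne : ∀ i, (C i).Nonempty)
    (hdir : ∀ i j, ∃ k, C k ⊆ C i ∩ C j) :
    {w | satp F.R (Function.update V p (⋂ i, C i)) g φ w} =
      ⋂ i, {w | satp F.R (Function.update V p (C i)) g φ w} := by
  obtain ⟨hdiff, htight, hcpt⟩ := hF
  have hcl : ∀ i, EsakiaAux.clsd F (C i) := fun i => EsakiaAux.isClosed_clsd F (hclosed i)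
  ext w
  simp only [Set.mem_setOf_eq, Set.mem_iInter]
  constructor
  · intro h i
    exact (EsakiaAux.satp_mono g p V (Set.iInter_subset C i) φ w).1 hpos h
  · intro h
    exact (EsakiaAux.main F hdiff htight hcpt p V hV g C hcl hdir φ w).1 hc hpos h
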